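/- The minimum distance of the concatenated rank-metric (CRM) code equals the minimum rank distance of the outer code: if the outer code A ⊆ GF(2^{k_b})^{n_a} has minimum rank distance d_a, and the inner encoding appends parity bits via an injective GF(2)-linear map from GF(2)^{k_b} to GF(2)^{n_b} applied to each row of the coordinate matrix, then the minimum of rank(CCM(m)) over nonzero messages m equals d_a. -/

import Mathlib

lemma rank_row_map_eq {K : Type*} [Field K] {m n p : ℕ}
    (M : Matrix (Fin m) (Fin n) K) (f : (Fin n → K) →ₗ[K] (Fin p → K))
    (hf : Function.Injective f) (N : Matrix (Fin m) (Fin p) K)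
    (hN : ∀ i, N i = f (M i)) :
    N.rank = M.rank := by
  rw [Matrix.rank_eq_finrank_span_row, Matrix.rank_eq_finrank_span_row]
  have hrange : Set.range N = f '' Set.range M := by
    ext x
    constructor
    · rintro ⟨i, rfl⟩; exact ⟨M i, ⟨i, rfl⟩, (hN i).symm⟩
    · rintro ⟨y, ⟨i, rfl⟩, rfl⟩; exact ⟨i, hN i⟩
  rw [show N.row = N from rfl, show M.row = M from rfl, hrange, ← Submodule.map_span]
  exact (LinearEquiv.finrank_eq
    (Submodule.equivMapOfInjective f hf (Submodule.span K (Set.range M)))).symm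

/-- The minimum distance of the concatenated rank-metric (CRM) code equals the
minimum rank distance of the outer code: if the outer code `A ⊆ GF(2^{k_b})^{n_a}` has
minimum rank distance `d_a` (minimum over nonzero codewords of the rank of the
`n_a × k_b` binary coordinate matrix `B a`), and the inner encoding applies an injective
systematic `GF(2)`-linear map `E : GF(2)^{k_b} → GF(2)^{n_b}` to each row, then the minimum
of `rank (CCM a)` over nonzero codewords `a ∈ A` equals `d_a`. -/
theorem stmt13 (kb nb na da : ℕ) (hkb : kb ≤ nb)
    (L : Type*) [Field L] [Algebra (ZMod 2) L]
    (bL : Module.Basis (Fin kb) (ZMod 2) L)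
    (A : Submodule L (Fin na → L))
    (E : (Fin kb → ZMod 2) →ₗ[ZMod 2] (Fin nb → ZMod 2))
    (hEinj : Function.Injective E)
    (hEsys : ∀ (v : Fin kb → ZMod 2) (j : Fin kb), E v (Fin.castLE hkb j) = v j)
    (B : (Fin na → L) → Matrix (Fin na) (Fin kb) (ZMod 2))
    (hB : ∀ a i j, B a i j = bL.repr (a i) j)
    (CCM : (Fin na → L) → Matrix (Fin na) (Fin nb) (ZMod 2))
    (hCCM : ∀ a i, CCM a i = E (B a i))
    (hda : IsLeast {m : ℕ | ∃ a ∈ A, a ≠ 0 ∧ (B a).rank = m} da) :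
    IsLeast {m : ℕ | ∃ a ∈ A, a ≠ 0 ∧ (CCM a).rank = m} da := by
  have key : ∀ a, (CCM a).rank = (B a).rank := fun a =>
    rank_row_map_eq (B a) E hEinj (CCM a) (hCCM a)
  have hset : {m : ℕ | ∃ a ∈ A, a ≠ 0 ∧ (CCM a).rank = m} =
      {m : ℕ | ∃ a ∈ A, a ≠ 0 ∧ (B a).rank = m} := by
    ext m
    simp only [Set.mem_setOf_eq, key]
  rw [hset]
  exact hda
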